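/- Let p > 2 and B > 0 be real numbers; set α₁ = B^(−p/(p−2)), d = (1/2 − 1/p)·α₁², and g(x) = x²/2 − (B^p/p)·x^p for x ≥ 0. Let E₀ < d, and let x : [0, ∞) → ℝ be a continuous function with x(t) ≥ 0 and g(x(t)) ≤ E₀ for all t ≥ 0, and x(0) > α₁. Then there exists α₂ > α₁ with g(α₂) = E₀ such that x(t) ≥ α₂ for all t ≥ 0. -/

import Mathlib

theorem vitillaro_lemma (p B E₀ : ℝ) (hp : 2 < p) (hB : 0 < B)
    (x : ℝ → ℝ) (hcont : ContinuousOn x (Set.Ici 0))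
    (hE : E₀ < (1 / 2 - 1 / p) * (B ^ (-(p / (p - 2)))) ^ 2)
    (hx0 : ∀ t : ℝ, 0 ≤ t → 0 ≤ x t)
    (hg : ∀ t : ℝ, 0 ≤ t → (x t) ^ 2 / 2 - B ^ p / p * (x t) ^ p ≤ E₀)
    (hinit : B ^ (-(p / (p - 2))) < x 0) :
    ∃ α₂ : ℝ, B ^ (-(p / (p - 2))) < α₂ ∧
      α₂ ^ 2 / 2 - B ^ p / p * α₂ ^ p = E₀ ∧
      ∀ t : ℝ, 0 ≤ t → α₂ ≤ x t := by
  set a : ℝ := -(p / (p - 2)) with ha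
  set α₁ : ℝ := B ^ a with hα₁
  set g : ℝ → ℝ := fun y => y ^ 2 / 2 - B ^ p / p * y ^ p with hgdef
  have hp0 : (0 : ℝ) < p := by linarith
  have hp2 : (0 : ℝ) < p - 2 := by linarith
  have hα₁pos : 0 < α₁ := Real.rpow_pos_of_pos hB a
  -- key algebraic identity : B^p * α₁^(p-2) = 1
  have hkey : B ^ p * α₁ ^ (p - 2) = 1 := by
    rw [hα₁, ← Real.rpow_mul hB.le, ← Real.rpow_add hB]
    have : p + a * (p - 2) = 0 := by
      rw [ha]; field_simp; ring
    rw [this, Real.rpow_zero]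
  -- value of g at α₁
  have hgα₁ : g α₁ = (1 / 2 - 1 / p) * α₁ ^ 2 := by
    have h1 : α₁ ^ p = α₁ ^ (p - 2) * α₁ ^ (2 : ℕ) := by
      rw [← Real.rpow_natCast α₁ 2, ← Real.rpow_add hα₁pos]
      norm_num
    have h3 : B ^ p * α₁ ^ p = α₁ ^ (2 : ℕ) := by
      rw [h1, ← mul_assoc, hkey, one_mul]
    simp only [hgdef]
    have hpne : p ≠ 0 := hp0.ne'
    field_simp
    nlinarith [h3]
  -- g is strictly decreasing on [α₁, ∞)
  have hgc : Continuous g := by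
    apply Continuous.sub ((continuous_pow 2).div_const 2)
    apply Continuous.mul continuous_const
    rw [continuous_iff_continuousAt]
    intro y
    exact Real.continuousAt_rpow_const y p (Or.inr hp0.le)
  have hderiv : ∀ y : ℝ, 0 < y → HasDerivAt g (y - B ^ p * y ^ (p - 1)) y := by
    intro y hy
    have h1 : HasDerivAt (fun y : ℝ => y ^ 2 / 2) y y := by
      have := (hasDerivAt_pow 2 y).div_const 2
      simpa using this
    have h2 : HasDerivAt (fun y : ℝ => B ^ p / p * y ^ p)
        (B ^ p / p * (p * y ^ (p - 1))) y :=
      (Real.hasDerivAt_rpow_const (Or.inl hy.ne')).const_mul _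
    have h3 := h1.sub h2
    have heq : y - B ^ p / p * (p * y ^ (p - 1)) = y - B ^ p * y ^ (p - 1) := by
      field_simp
    rw [heq] at h3
    exact h3
  have hanti : StrictAntiOn g (Set.Ici α₁) := by
    apply strictAntiOn_of_deriv_neg (convex_Ici α₁) hgc.continuousOn
    intro y hy
    rw [interior_Ici] at hy
    have hy0 : 0 < y := lt_trans hα₁pos hy
    rw [(hderiv y hy0).deriv]
    -- need y < B^p * y^(p-1)
    have h1 : α₁ ^ (p - 2) < y ^ (p - 2) :=
      Real.rpow_lt_rpow hα₁pos.le hy hp2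
    have h2 : 1 < B ^ p * y ^ (p - 2) := by
      calc 1 = B ^ p * α₁ ^ (p - 2) := hkey.symm
        _ < B ^ p * y ^ (p - 2) := by
            exact mul_lt_mul_of_pos_left h1 (Real.rpow_pos_of_pos hB p)
    have h3 : y ^ (p - 1) = y ^ (p - 2) * y := by
      have he : p - 1 = (p - 2) + 1 := by ring
      rw [he, Real.rpow_add hy0, Real.rpow_one]
    have : y < B ^ p * y ^ (p - 1) := by
      rw [h3]
      calc y = 1 * y := (one_mul y).symm
        _ < (B ^ p * y ^ (p - 2)) * y := by
            exact mul_lt_mul_of_pos_right h2 hy0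
        _ = B ^ p * (y ^ (p - 2) * y) := by ring
    linarith
  -- existence of α₂ by IVT on [α₁, x 0]
  have hd : E₀ < g α₁ := by rw [hgα₁]; exact hE
  have hgx0 : g (x 0) ≤ E₀ := hg 0 le_rfl
  have hivt := intermediate_value_Icc' hinit.le hgc.continuousOn
  obtain ⟨α₂, hα₂mem, hα₂eq⟩ := hivt ⟨hgx0, hd.le⟩
  have hα₂gt : α₁ < α₂ := by
    rcases lt_or_eq_of_le hα₂mem.1 with h | h
    · exact h
    · exfalso; rw [← h] at hα₂eq; linarith [hα₂eq]
  -- subclaim : if α₁ < y and g y ≤ E₀ then α₂ ≤ y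
  have hsub : ∀ y : ℝ, α₁ < y → g y ≤ E₀ → α₂ ≤ y := by
    intro y hy hgy
    by_contra h
    push_neg at h
    have := hanti (le_of_lt hy) (le_of_lt hα₂gt) h
    rw [hα₂eq] at this
    linarith
  refine ⟨α₂, hα₂gt, hα₂eq, ?_⟩
  intro t ht
  have hx0ge : α₂ ≤ x 0 := hsub (x 0) hinit hgx0
  -- show α₁ < x t, then conclude
  have hxt : α₁ < x t := by
    by_contra h
    push_neg at h
    set v : ℝ := (α₁ + α₂) / 2 with hv
    have hv1 : α₁ < v := by rw [hv]; linarith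
    have hv2 : v < α₂ := by rw [hv]; linarith
    have ht0 : (0 : ℝ) < t := by
      rcases eq_or_lt_of_le ht with h' | h'
      · exfalso; rw [← h'] at h; linarith
      · exact h'
    have hIcc : Set.Icc (0 : ℝ) t ⊆ Set.Ici (0 : ℝ) := fun s hs => hs.1
    have hivt2 := intermediate_value_Icc' ht0.le (hcont.mono hIcc)
    have hvmem : v ∈ Set.Icc (x t) (x 0) := ⟨by linarith, by linarith⟩
    obtain ⟨s, hsmem, hseq⟩ := hivt2 hvmem
    have hgv : g (x s) ≤ E₀ := hg s hsmem.1
    rw [hseq] at hgv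
    have := hsub v hv1 hgv
    linarith
  exact hsub (x t) hxt (hg t ht)
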